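/- Let (λ, μ) be a codimension-3 decoration with μ₁ = 1 (so μ = (1^k)). Then either λ₅ = 0 (at most four nonzero parts of λ, the almost complete intersection case) or λ₁ = k (the hyperplane section case). -/

import Mathlib

/-- Sort a list of integers in non-increasing order. -/
def rsort (l : List ℤ) : List ℤ := List.insertionSort (· ≥ ·) l

/-- Remove all non-positive parts (trailing zeros) from a partition. -/
def strip (l : List ℤ) : List ℤ := l.filter (fun x => 0 < x)

/-- The smallest minimal link of a codimension-`c` pair of partitions `(λ, μ)`:
choose the `c` largest parts of `λ` (padding with zeros if needed), shift them by
`p = (c-2)k + 1 - (λ₁ + ⋯ + λ_c)` where `k = ∑ μⱼ`, merge with `μ` and re-sort;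
the other partition becomes `(λ_{c+1}, …, λ_b)`. -/
def smlink (c : ℕ) (P : List ℤ × List ℤ) : List ℤ × List ℤ :=
  let p : ℤ := ((c : ℤ) - 2) * P.2.sum + 1 - (P.1.take c).sum
  (strip (rsort ((P.1.take c ++ List.replicate (c - P.1.length) 0).map (· + p) ++ P.2)),
   strip (P.1.drop c))

/-- The smallest minimal link of `P` produces nonnegative parts, i.e. `λ_c + p ≥ 0`. -/
def ValidLink (c : ℕ) (P : List ℤ × List ℤ) : Prop :=
  0 ≤ P.1.getD (c - 1) 0 + (((c : ℤ) - 2) * P.2.sum + 1 - (P.1.take c).sum)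

/-- A partition: a non-increasing list of positive integers. -/
def IsPartition (l : List ℤ) : Prop := l.Pairwise (· ≥ ·) ∧ ∀ x ∈ l, 0 < x

/-- A codimension-`c` decoration: a pair of partitions reachable to the complete
intersection pair `((1^c), (1))` by finitely many smallest minimal links, all of
whose intermediate links are valid (have nonnegative parts). -/
def IsDecoration (c : ℕ) (P : List ℤ × List ℤ) : Prop :=
  IsPartition P.1 ∧ IsPartition P.2 ∧
  ∃ n : ℕ, (∀ m < n, ValidLink c ((smlink c)^[m] P)) ∧
    (smlink c)^[n] P = (List.replicate c 1, [1])

namespace Dec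

lemma mem_strip {l : List ℤ} {x : ℤ} : x ∈ strip l ↔ x ∈ l ∧ 0 < x := by
  simp [strip, List.mem_filter]

lemma strip_eq_self {l : List ℤ} (h : ∀ x ∈ l, 0 < x) : strip l = l :=
  List.filter_eq_self.2 (fun x hx => by simpa using h x hx)

lemma sum_strip {l : List ℤ} (h : ∀ x ∈ l, 0 ≤ x) : (strip l).sum = l.sum := by
  induction l with
  | nil => rfl
  | cons a t ih =>
    have ha := h a (by simp)
    have ht := ih (fun x hx => h x (by simp [hx]))
    rcases lt_or_eq_of_le ha with h1 | h1
    · simp [strip, List.filter_cons, h1] at ht ⊢; omega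
    · simp [strip, List.filter_cons, ← h1] at ht ⊢; omega

lemma rsort_perm (l : List ℤ) : (rsort l).Perm l := List.perm_insertionSort _ l

lemma rsort_sorted (l : List ℤ) : (rsort l).Pairwise (· ≥ ·) := List.pairwise_insertionSort _ l

lemma mem_rsort {l : List ℤ} {x : ℤ} : x ∈ rsort l ↔ x ∈ l := (rsort_perm l).mem_iff

lemma strip_rsort_partition (l : List ℤ) : IsPartition (strip (rsort l)) :=
  ⟨(rsort_sorted l).sublist List.filter_sublist,
   fun x hx => (mem_strip.1 hx).2⟩

lemma sum_strip_rsort {l : List ℤ} (h : ∀ x ∈ l, 0 ≤ x) : (strip (rsort l)).sum = l.sum := by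
  rw [sum_strip (fun x hx => h x (mem_rsort.1 hx))]
  exact (rsort_perm l).sum_eq

lemma mem_strip_rsort {l : List ℤ} {x : ℤ} : x ∈ strip (rsort l) ↔ x ∈ l ∧ 0 < x := by
  rw [mem_strip, mem_rsort]

/-- getD of a list whose elements are bounded is bounded. -/
lemma getD_le {l : List ℤ} {c : ℤ} (h : ∀ x ∈ l, x ≤ c) (hc : 0 ≤ c) (i : ℕ) :
    l.getD i 0 ≤ c := by
  by_cases hi : i < l.length
  · rw [List.getD_eq_getElem _ _ hi]; exact h _ (l.getElem_mem hi)
  · rw [List.getD_eq_default _ _ (by omega)]; exact hc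

lemma getD_nonneg {l : List ℤ} (h : IsPartition l) (i : ℕ) : 0 ≤ l.getD i 0 := by
  by_cases hi : i < l.length
  · rw [List.getD_eq_getElem _ _ hi]; exact le_of_lt (h.2 _ (l.getElem_mem hi))
  · rw [List.getD_eq_default _ _ (by omega)]

lemma sorted_getD_mono {l : List ℤ} (h : IsPartition l) {i j : ℕ} (hij : i ≤ j) :
    l.getD j 0 ≤ l.getD i 0 := by
  by_cases hj : j < l.length
  · have hi : i < l.length := lt_of_le_of_lt hij hj
    rw [List.getD_eq_getElem _ _ hi, List.getD_eq_getElem _ _ hj]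
    rcases eq_or_lt_of_le hij with rfl | hlt
    · exact le_refl _
    · exact List.pairwise_iff_getElem.1 h.1 i j hi hj hlt
  · rw [List.getD_eq_default _ _ (by omega)]; exact getD_nonneg h i

lemma mem_le_getD0 {l : List ℤ} (h : l.Pairwise (· ≥ ·)) {x : ℤ} (hx : x ∈ l) :
    x ≤ l.getD 0 0 := by
  cases l with
  | nil => simp at hx
  | cons a t =>
    rcases List.mem_cons.1 hx with rfl | hx
    · simp
    · exact (List.pairwise_cons.1 h).1 x hx

lemma getD_drop (l : List ℤ) (m i : ℕ) : (l.drop m).getD i 0 = l.getD (m + i) 0 := by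
  by_cases h : m + i < l.length
  · have h2 : i < (l.drop m).length := by rw [List.length_drop]; omega
    rw [List.getD_eq_getElem _ _ h2, List.getD_eq_getElem _ _ h, List.getElem_drop]
  · rw [List.getD_eq_default _ _ (by rw [List.length_drop]; omega), List.getD_eq_default _ _ (by omega)]

lemma getD01_le_sum {l : List ℤ} (h : ∀ x ∈ l, 0 ≤ x) :
    l.getD 0 0 + l.getD 1 0 ≤ l.sum := by
  match l with
  | [] => simp
  | [a] => simp
  | a :: b :: t =>
    have : 0 ≤ t.sum := List.sum_nonneg (fun x hx => h x (by simp [hx]))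
    simp [List.sum_cons]; omega

lemma getD0_le_sum {l : List ℤ} (h : ∀ x ∈ l, 0 ≤ x) : l.getD 0 0 ≤ l.sum := by
  have := getD01_le_sum h
  have h1 : 0 ≤ l.getD 1 0 := by
    by_cases hi : 1 < l.length
    · rw [List.getD_eq_getElem _ _ hi]; exact h _ (l.getElem_mem hi)
    · rw [List.getD_eq_default _ _ (by omega)]
  omega

lemma take3pad_eq (l : List ℤ) :
    l.take 3 ++ List.replicate (3 - l.length) 0 = [l.getD 0 0, l.getD 1 0, l.getD 2 0] := by
  match l with
  | [] => rfl
  | [a] => rfl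
  | [a, b] => rfl
  | a :: b :: c :: t => simp [List.take, List.getD]

lemma sum_take3 (l : List ℤ) : (l.take 3).sum = l.getD 0 0 + l.getD 1 0 + l.getD 2 0 := by
  match l with
  | [] => simp
  | [a] => simp [List.getD]
  | [a, b] => simp [List.getD]
  | a :: b :: c :: t => simp [List.getD]; ring

lemma sum_take4 (l : List ℤ) :
    (l.take 4).sum = l.getD 0 0 + l.getD 1 0 + l.getD 2 0 + l.getD 3 0 := by
  match l with
  | [] => simp
  | [a] => simp [List.getD]
  | [a, b] => simp [List.getD]
  | [a, b, c] => simp [List.getD]; ring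
  | a :: b :: c :: d :: t => simp [List.getD]; ring

end Dec
namespace Dec

/-- A positive member of `M` is at most the head of `strip (rsort M)`. -/
lemma le_getD0_strip_rsort {M : List ℤ} {x : ℤ} (hx : x ∈ M) (hpos : 0 < x) :
    x ≤ (strip (rsort M)).getD 0 0 := by
  have hmem : x ∈ strip (rsort M) := mem_strip_rsort.2 ⟨hx, hpos⟩
  exact mem_le_getD0 (strip_rsort_partition M).1 hmem

lemma getD_strip_rsort_le {M : List ℤ} {c : ℤ} (h : ∀ x ∈ M, x ≤ c) (hc : 0 ≤ c) (i : ℕ) :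
    (strip (rsort M)).getD i 0 ≤ c :=
  getD_le (fun x hx => h x (mem_strip_rsort.1 hx).1) hc i

/-- In a list `M = a :: T`, at most (count of a) elements exceed any bound on T. -/
lemma two_largest {a : ℤ} {T : List ℤ} {c₁ c₂ : ℤ}
    (ha : a ≤ c₁) (hT : ∀ x ∈ T, x ≤ c₂) (h0 : 0 ≤ c₂) (hc : c₂ ≤ c₁) :
    (strip (rsort (a :: T))).getD 0 0 + (strip (rsort (a :: T))).getD 1 0 ≤ c₁ + c₂ := by
  have hmemle : ∀ x ∈ a :: T, x ≤ c₁ := by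
    intro x hx
    rcases List.mem_cons.1 hx with rfl | hx
    · exact ha
    · exact le_trans (hT x hx) hc
  rcases hLeq : strip (rsort (a :: T)) with _ | ⟨x, _ | ⟨y, r⟩⟩
  · simp; linarith
  · have hx : x ∈ a :: T := (mem_strip_rsort.1 (hLeq ▸ List.mem_singleton.2 rfl)).1
    have := hmemle x hx
    simp; linarith
  · have hxL : x ∈ strip (rsort (a :: T)) := by rw [hLeq]; simp
    have hyL : y ∈ strip (rsort (a :: T)) := by rw [hLeq]; simp
    have hx : x ∈ a :: T := (mem_strip_rsort.1 hxL).1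
    have hxc : x ≤ c₁ := hmemle x hx
    by_cases hyc : y ≤ c₂
    · simp; linarith
    · exfalso
      push_neg at hyc
      have hsort := (strip_rsort_partition (a :: T)).1
      rw [hLeq] at hsort
      have hxy : y ≤ x := (List.pairwise_cons.1 hsort).1 y (by simp)
      set q : ℤ → Bool := fun z => decide (c₂ < z) with hq
      have hqx : q x = true := by simp [hq]; linarith
      have hqy : q y = true := by simp [hq]; exact hyc
      have h2 : 2 ≤ (strip (rsort (a :: T))).countP q := by
        rw [hLeq, List.countP_cons_of_pos hqx, List.countP_cons_of_pos hqy]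
        omega
      have hle : (strip (rsort (a :: T))).countP q ≤ (a :: T).countP q :=
        calc (strip (rsort (a :: T))).countP q ≤ (rsort (a :: T)).countP q :=
              List.Sublist.countP_le List.filter_sublist
          _ = (a :: T).countP q := (rsort_perm (a :: T)).countP_eq _
      have hT0 : T.countP q = 0 := List.countP_eq_zero.2 (fun z hz => by
        simp [hq]; linarith [hT z hz])
      have hMc : (a :: T).countP q ≤ 1 := by
        rw [List.countP_cons, hT0]
        split <;> omega
      omega

/-- All positive, length ≥ 5 ⇒ fifth entry positive. -/
lemma pos_getD4 {M : List ℤ} (h : ∀ x ∈ M, 0 < x) (hlen : 5 ≤ M.length) :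
    0 < (strip (rsort M)).getD 4 0 := by
  have hself : strip (rsort M) = rsort M :=
    strip_eq_self (fun x hx => h x (mem_rsort.1 hx))
  rw [hself]
  have hlen2 : 4 < (rsort M).length := by
    rw [rsort, List.length_insertionSort]; omega
  rw [List.getD_eq_getElem _ _ hlen2]
  exact h _ (mem_rsort.1 ((rsort M).getElem_mem hlen2))

end Dec
namespace Dec

lemma smlink3_eq (l mu : List ℤ) :
    smlink 3 (l, mu) =
      (strip (rsort ([l.getD 0 0 + (mu.sum + 1 - (l.getD 0 0 + l.getD 1 0 + l.getD 2 0)),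
                      l.getD 1 0 + (mu.sum + 1 - (l.getD 0 0 + l.getD 1 0 + l.getD 2 0)),
                      l.getD 2 0 + (mu.sum + 1 - (l.getD 0 0 + l.getD 1 0 + l.getD 2 0))] ++ mu)),
       strip (l.drop 3)) := by
  have h3 : ((3:ℕ) : ℤ) - 2 = 1 := by norm_num
  simp only [smlink, h3, one_mul, take3pad_eq l, sum_take3 l, List.map_cons, List.map_nil]

lemma validlink3_iff (l mu : List ℤ) :
    ValidLink 3 (l, mu) ↔
      0 ≤ l.getD 2 0 + (mu.sum + 1 - (l.getD 0 0 + l.getD 1 0 + l.getD 2 0)) := by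
  have h3 : ((3:ℕ) : ℤ) - 2 = 1 := by norm_num
  simp only [ValidLink, h3, one_mul, sum_take3 l]

lemma smlink_fst_partition (P : List ℤ × List ℤ) : IsPartition (smlink 3 P).1 :=
  strip_rsort_partition _

lemma smlink_snd_partition (P : List ℤ × List ℤ) (h : IsPartition P.1) :
    IsPartition (smlink 3 P).2 := by
  have : (smlink 3 P).2 = strip (P.1.drop 3) := rfl
  rw [this]
  exact ⟨(h.1.drop (i := 3)).sublist List.filter_sublist,
    fun x hx => (mem_strip.1 hx).2⟩

lemma partition_sum_nonneg {l : List ℤ} (h : IsPartition l) : 0 ≤ l.sum :=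
  List.sum_nonneg (fun x hx => le_of_lt (h.2 x hx))

/-- The main invariant: C, E, B for every codim-3 decoration. -/
lemma inv : ∀ (n : ℕ) (l mu : List ℤ), IsPartition l → IsPartition mu →
    (∀ m < n, ValidLink 3 ((smlink 3)^[m] (l, mu))) →
    (smlink 3)^[n] (l, mu) = (List.replicate 3 1, [1]) →
    l.sum = 2 * mu.sum + 1 ∧ l.getD 0 0 ≤ mu.sum ∧
      mu.sum + 2 ≤ mu.getD 0 0 + l.getD 0 0 + l.getD 1 0 := by
  intro n
  induction n with
  | zero =>
    intro l mu _ _ _ he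
    simp only [Function.iterate_zero, id_eq, Prod.mk.injEq] at he
    obtain ⟨h1, h2⟩ := he
    subst h1; subst h2
    norm_num [List.replicate, List.getD]
  | succ n ih =>
    intro l mu h1 h2 hv he
    -- notation
    set g0 := l.getD 0 0 with hg0
    set g1 := l.getD 1 0 with hg1
    set g2 := l.getD 2 0 with hg2
    set k := mu.sum with hk
    set p : ℤ := k + 1 - (g0 + g1 + g2) with hp
    set M : List ℤ := [g0 + p, g1 + p, g2 + p] ++ mu with hM
    -- validity at step 0
    have hv0 : 0 ≤ g2 + p := by
      have := hv 0 (by omega)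
      rw [Function.iterate_zero, id_eq, validlink3_iff] at this
      linarith
    have h21 : g2 ≤ g1 := sorted_getD_mono h1 (by omega)
    have h10 : g1 ≤ g0 := sorted_getD_mono h1 (by omega)
    -- the linked pair
    have hsm : smlink 3 (l, mu) = (strip (rsort M), strip (l.drop 3)) := by
      rw [smlink3_eq]
    have hdrop : strip (l.drop 3) = l.drop 3 :=
      strip_eq_self (fun x hx => h1.2 x (List.mem_of_mem_drop hx))
    rw [hdrop] at hsm
    -- decoration data at the linked pair
    have hv' : ∀ m < n, ValidLink 3 ((smlink 3)^[m] (strip (rsort M), l.drop 3)) := by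
      intro m hm
      have := hv (m + 1) (by omega)
      rwa [Function.iterate_succ_apply, hsm] at this
    have he' : (smlink 3)^[n] (strip (rsort M), l.drop 3) = (List.replicate 3 1, [1]) := by
      rw [← hsm, ← Function.iterate_succ_apply]
      exact he
    have hP'1 : IsPartition (strip (rsort M)) := strip_rsort_partition M
    have hP'2 : IsPartition (l.drop 3) :=
      ⟨h1.1.drop, fun x hx => h1.2 x (List.mem_of_mem_drop hx)⟩
    obtain ⟨hC', hE', hB'⟩ := ih (strip (rsort M)) (l.drop 3) hP'1 hP'2 hv' he'
    -- sums
    have hMnonneg : ∀ x ∈ M, 0 ≤ x := by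
      intro x hx
      rw [hM] at hx
      simp only [List.mem_append, List.mem_cons, List.not_mem_nil, or_false] at hx
      rcases hx with (rfl | rfl | rfl) | hx
      · linarith
      · linarith
      · linarith
      · exact le_of_lt (h2.2 x hx)
    have hsumL : (strip (rsort M)).sum = (g0 + g1 + g2) + 3 * p + k := by
      rw [sum_strip_rsort hMnonneg, hM]
      simp [List.sum_append]
      ring
    have hsumdrop : (l.drop 3).sum = l.sum - (g0 + g1 + g2) := by
      have := List.sum_take_add_sum_drop l 3
      rw [sum_take3 l] at this
      linarith
    -- (C)
    have hC : l.sum = 2 * k + 1 := by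
      rw [hsumL, hsumdrop] at hC'
      linarith
    have hk' : (l.drop 3).sum = k + p := by rw [hsumdrop, hC]; linarith
    have hk'0 : 0 ≤ (l.drop 3).sum := partition_sum_nonneg hP'2
    -- (E)
    have hE : g0 ≤ k := by
      have h20 : g2 ≤ g0 := sorted_getD_mono h1 (by omega)
      rcases eq_or_lt_of_le (by linarith : (0:ℤ) ≤ g0 + p) with h0 | h0
      · linarith
      · have hmem : g0 + p ∈ M := by rw [hM]; simp
        have := le_getD0_strip_rsort hmem h0
        linarith
    -- (B)
    have hB : k + 2 ≤ mu.getD 0 0 + g0 + g1 := by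
      by_contra hcon
      push_neg at hcon
      have hmu0 : mu.getD 0 0 ≤ g2 + p := by linarith
      have htwo : (strip (rsort M)).getD 0 0 + (strip (rsort M)).getD 1 0
          ≤ (g0 + p) + (g1 + p) := by
        have : M = (g0 + p) :: ([g1 + p, g2 + p] ++ mu) := by rw [hM]; rfl
        rw [this]
        apply two_largest (le_refl _) _ (by linarith) (by linarith)
        intro x hx
        simp only [List.mem_append, List.mem_cons, List.not_mem_nil, or_false] at hx
        rcases hx with (rfl | rfl) | hx
        · linarith
        · linarith
        · have := mem_le_getD0 h2.1 hx
          linarith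
      have hmu'0 : (l.drop 3).getD 0 0 = l.getD 3 0 := getD_drop l 3 0
      have h32 : l.getD 3 0 ≤ g2 := sorted_getD_mono h1 (by omega)
      rw [hmu'0, hk'] at hB'
      linarith
    exact ⟨hC, hE, hB⟩

end Dec
namespace Dec

lemma mem_drop_le {l : List ℤ} (h : l.Pairwise (· ≥ ·)) {m : ℕ} {x : ℤ}
    (hx : x ∈ l.drop m) : x ≤ l.getD m 0 := by
  have := mem_le_getD0 (h.drop (i := m)) hx
  rwa [getD_drop] at this

lemma strip_replicate_one (kn : ℕ) :
    strip (List.replicate kn (1:ℤ)) = List.replicate kn 1 :=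
  strip_eq_self (fun x hx => by rw [List.eq_of_mem_replicate hx]; norm_num)

lemma strip_rsort_d {d : ℤ} (hd : 1 ≤ d) (kn : ℕ) :
    strip (rsort ([d, 0, 0] ++ List.replicate kn 1)) = d :: List.replicate kn 1 := by
  have hperm : (rsort ([d,0,0] ++ List.replicate kn 1)).Perm
      (d :: (List.replicate kn 1 ++ [0,0])) := by
    refine (rsort_perm _).trans ?_
    have h1 : ([d,0,0] ++ List.replicate kn 1 : List ℤ)
        = [d] ++ ([0,0] ++ List.replicate kn 1) := by simp
    rw [h1]
    exact List.Perm.append_left [d] (List.perm_append_comm)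
  have hsorted : (d :: (List.replicate kn 1 ++ [0,0])).Pairwise (· ≥ ·) := by
    refine List.pairwise_cons.2 ⟨?_, ?_⟩
    · intro b hb
      rcases List.mem_append.1 hb with hb | hb
      · rw [List.eq_of_mem_replicate hb]; exact hd
      · simp at hb; rw [hb]; linarith
    · refine List.pairwise_append.2 ⟨?_, ?_, ?_⟩
      · exact List.pairwise_replicate.2 (Or.inr (le_refl 1))
      · simp
      · intro a ha b hb
        rw [List.eq_of_mem_replicate ha]
        simp at hb; rw [hb]; norm_num
  have heq := List.Perm.eq_of_pairwise (fun a b _ _ h1 h2 => le_antisymm h2 h1) (rsort_sorted _) hsorted hperm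
  rw [heq]
  have h2 : (0:ℤ) < d := by linarith
  unfold strip
  rw [List.filter_cons_of_pos (by simpa using h2), List.filter_append]
  rw [show List.filter (fun x => decide (0 < x)) ([0,0] : List ℤ) = [] from rfl]
  rw [List.append_nil, ← strip, strip_replicate_one]

lemma getD_replicate_one (kn : ℕ) (hk : 0 < kn) (i : ℕ) (hi : i < kn) :
    (List.replicate kn (1:ℤ)).getD i 0 = 1 := by
  rw [List.getD_eq_getElem _ _ (by simpa using hi)]
  simp

end Dec
namespace Dec

theorem aux : ∀ (n : ℕ) (l mu : List ℤ), IsPartition l → IsPartition mu →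
    (∀ m < n, ValidLink 3 ((smlink 3)^[m] (l, mu))) →
    (smlink 3)^[n] (l, mu) = (List.replicate 3 1, [1]) →
    mu.getD 0 0 = 1 →
    l.getD 4 0 = 0 ∨ l.getD 0 0 = mu.sum := by
  intro n
  induction n using Nat.strong_induction_on with
  | _ n ih =>
  intro l mu h1 h2 hv he hmu
  by_cases hl5 : l.getD 4 0 = 0
  · exact Or.inl hl5
  by_cases hl0 : l.getD 0 0 = mu.sum
  · exact Or.inr hl0
  exfalso
  -- mu is all ones
  have hones : ∀ x ∈ mu, x = 1 := by
    intro x hx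
    have hle : x ≤ 1 := hmu ▸ mem_le_getD0 h2.1 hx
    have hpos : 0 < x := h2.2 x hx
    omega
  have hmurep : mu = List.replicate mu.length 1 := List.eq_replicate_of_mem hones
  have hk_kn : mu.sum = (mu.length : ℤ) := by
    conv_lhs => rw [hmurep]
    simp
  -- lambda facts
  have hpos4 : 0 < l.getD 4 0 := lt_of_le_of_ne (getD_nonneg h1 4) (Ne.symm hl5)
  have hlen : 4 < l.length := by
    by_contra hcon
    exact hl5 (List.getD_eq_default _ _ (by omega))
  have h43 : l.getD 4 0 ≤ l.getD 3 0 := sorted_getD_mono h1 (by omega)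
  have h32 : l.getD 3 0 ≤ l.getD 2 0 := sorted_getD_mono h1 (by omega)
  have h21 : l.getD 2 0 ≤ l.getD 1 0 := sorted_getD_mono h1 (by omega)
  have h10 : l.getD 1 0 ≤ l.getD 0 0 := sorted_getD_mono h1 (by omega)
  -- zero case
  have hn0 : n ≠ 0 := by
    rintro rfl
    simp only [Function.iterate_zero, id_eq, Prod.mk.injEq] at he
    rw [he.1] at hlen
    simp at hlen
  -- the invariant at (l, mu)
  obtain ⟨hC, hE, hB⟩ := inv n l mu h1 h2 hv he
  rw [hmu] at hB
  -- validity at step 0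
  have hv0 : 0 ≤ l.getD 2 0 + (mu.sum + 1 - (l.getD 0 0 + l.getD 1 0 + l.getD 2 0)) := by
    have := hv 0 (by omega)
    rwa [Function.iterate_zero, id_eq, validlink3_iff] at this
  -- λ₁ + λ₂ = k + 1
  have hsum01 : l.getD 0 0 + l.getD 1 0 = mu.sum + 1 := by linarith
  have hg0le : l.getD 0 0 ≤ mu.sum - 1 := by
    rcases lt_or_eq_of_le hE with h | h
    · linarith
    · exact absurd h hl0
  have hg1ge : 2 ≤ l.getD 1 0 := by linarith
  -- the linked pair
  set p : ℤ := mu.sum + 1 - (l.getD 0 0 + l.getD 1 0 + l.getD 2 0) with hp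
  have hpe : p = -l.getD 2 0 := by rw [hp]; linarith
  set M : List ℤ := [l.getD 0 0 + p, l.getD 1 0 + p, l.getD 2 0 + p] ++ mu with hM
  have hsm : smlink 3 (l, mu) = (strip (rsort M), l.drop 3) := by
    rw [smlink3_eq, hM, hp]
    rw [strip_eq_self (fun x hx => h1.2 x (List.mem_of_mem_drop hx))]
  -- n ≥ 2
  have hn1 : n ≠ 1 := by
    rintro rfl
    rw [Function.iterate_one, hsm, Prod.mk.injEq] at he
    have := congrArg List.length he.2
    rw [List.length_drop] at this
    simp at this
    omega
  obtain ⟨n2, rfl⟩ : ∃ m, n = m + 2 := ⟨n - 2, by omega⟩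
  -- invariant at the linked pair
  have hv' : ∀ m < n2 + 1, ValidLink 3 ((smlink 3)^[m] (strip (rsort M), l.drop 3)) := by
    intro m hm
    have := hv (m + 1) (by omega)
    rwa [Function.iterate_succ_apply, hsm] at this
  have he' : (smlink 3)^[n2 + 1] (strip (rsort M), l.drop 3) = (List.replicate 3 1, [1]) := by
    rw [← hsm, ← Function.iterate_succ_apply]
    exact he
  have hP'2 : IsPartition (l.drop 3) :=
    ⟨h1.1.drop, fun x hx => h1.2 x (List.mem_of_mem_drop hx)⟩
  obtain ⟨hC', hE', hB'⟩ := inv (n2 + 1) (strip (rsort M)) (l.drop 3)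
    (strip_rsort_partition M) hP'2 hv' he'
  have hdropsum : (l.drop 3).sum = mu.sum - l.getD 2 0 := by
    have := List.sum_take_add_sum_drop l 3
    rw [sum_take3 l] at this
    linarith
  have hdrop0 : (l.drop 3).getD 0 0 = l.getD 3 0 := getD_drop l 3 0
  have hdrop1 : (l.drop 3).getD 1 0 = l.getD 4 0 := getD_drop l 3 1
  rw [hdropsum, hdrop0] at hB'
  -- Claim: g1 = g2
  have hg12 : l.getD 1 0 = l.getD 2 0 := by
    by_contra hcon
    have hgt : l.getD 2 0 + 1 ≤ l.getD 1 0 := by omega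
    have htwo : (strip (rsort M)).getD 0 0 + (strip (rsort M)).getD 1 0
        ≤ (l.getD 0 0 + p) + (l.getD 1 0 + p) := by
      rw [hM]
      rw [show ([l.getD 0 0 + p, l.getD 1 0 + p, l.getD 2 0 + p] ++ mu : List ℤ)
          = (l.getD 0 0 + p) :: ([l.getD 1 0 + p, l.getD 2 0 + p] ++ mu) from rfl]
      apply two_largest (le_refl _) _ (by linarith) (by linarith)
      intro x hx
      simp only [List.mem_append, List.mem_cons, List.not_mem_nil, or_false] at hx
      rcases hx with (rfl | rfl) | hx
      · linarith
      · linarith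
      · rw [hones x hx]; linarith
    linarith
  -- Case g0 = g1
  rcases eq_or_lt_of_le h10 with hcase | hcase
  · -- g0 = g1 = g2
    have htwo : (strip (rsort M)).getD 0 0 + (strip (rsort M)).getD 1 0 ≤ 1 + 1 := by
      rw [hM]
      rw [show ([l.getD 0 0 + p, l.getD 1 0 + p, l.getD 2 0 + p] ++ mu : List ℤ)
          = (l.getD 0 0 + p) :: ([l.getD 1 0 + p, l.getD 2 0 + p] ++ mu) from rfl]
      apply two_largest (by linarith) _ (by linarith) (le_refl _)
      intro x hx
      simp only [List.mem_append, List.mem_cons, List.not_mem_nil, or_false] at hx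
      rcases hx with (rfl | rfl) | hx
      · linarith
      · linarith
      · rw [hones x hx]
    have hsum2 : (l.drop 3).getD 0 0 + (l.drop 3).getD 1 0 ≤ (l.drop 3).sum :=
      getD01_le_sum (fun x hx => le_of_lt (hP'2.2 x hx))
    rw [hdropsum, hdrop0, hdrop1] at hsum2
    linarith
  -- Case g0 > g1
  -- Case g0 > g1 : here g1 = g2, d := g0 - g1 ≥ 1
  have hd1 : (1:ℤ) ≤ l.getD 0 0 - l.getD 1 0 := by linarith
  have hg0ge3 : 3 ≤ l.getD 0 0 := by linarith
  have hkge4 : 4 ≤ mu.sum := by linarith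
  -- λ₄ = λ₂ via B'
  have htwo2 : (strip (rsort M)).getD 0 0 + (strip (rsort M)).getD 1 0
      ≤ (l.getD 0 0 + p) + 1 := by
    rw [hM]
    rw [show ([l.getD 0 0 + p, l.getD 1 0 + p, l.getD 2 0 + p] ++ mu : List ℤ)
        = (l.getD 0 0 + p) :: ([l.getD 1 0 + p, l.getD 2 0 + p] ++ mu) from rfl]
    apply two_largest (le_refl _) _ (by linarith) (by linarith)
    intro x hx
    simp only [List.mem_append, List.mem_cons, List.not_mem_nil, or_false] at hx
    rcases hx with (rfl | rfl) | hx
    · linarith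
    · linarith
    · rw [hones x hx]
  have hg31 : l.getD 3 0 = l.getD 1 0 := by
    have hlow : l.getD 1 0 ≤ l.getD 3 0 := by linarith
    linarith
  -- explicit structure of the linked pair
  have hkn4 : 4 ≤ mu.length := by
    have : (4:ℤ) ≤ (mu.length : ℤ) := by linarith
    exact_mod_cast this
  obtain ⟨K, hKlen⟩ : ∃ K, mu.length = K + 2 := ⟨mu.length - 2, by omega⟩
  have hK2 : 2 ≤ K := by omega
  have hmurep2 : mu = List.replicate (K + 2) 1 := by rw [hmurep, hKlen]
  have hsumK : mu.sum = (K : ℤ) + 2 := by rw [hk_kn, hKlen]; push_cast; ring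
  have e0 : l.getD 0 0 + p = l.getD 0 0 - l.getD 1 0 := by rw [hpe, hg12]; ring
  have e1 : l.getD 1 0 + p = 0 := by rw [hpe, hg12]; ring
  have e2 : l.getD 2 0 + p = 0 := by rw [hpe]; ring
  have hMeq : M = [l.getD 0 0 - l.getD 1 0, 0, 0] ++ List.replicate (K + 2) 1 := by
    rw [hM, hmurep2, e0, e1, e2]
  have hrep2 : List.replicate (K + 2) (1:ℤ) = 1 :: 1 :: List.replicate K 1 := by
    rw [show K + 2 = 2 + K from by omega, List.replicate_add]
    rfl
  have hLL : strip (rsort M)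
      = (l.getD 0 0 - l.getD 1 0) :: 1 :: 1 :: List.replicate K 1 := by
    rw [hMeq, strip_rsort_d hd1 (K + 2), hrep2]
  -- compute the second link
  set Lex : List ℤ := (l.getD 0 0 - l.getD 1 0) :: 1 :: 1 :: List.replicate K 1 with hLex
  set p2 : ℤ := (l.drop 3).sum + 1 - (l.getD 0 0 - l.getD 1 0 + 1 + 1) with hp2
  set M2 : List ℤ := [l.getD 0 0 - l.getD 1 0 + p2, 1 + p2, 1 + p2] ++ l.drop 3 with hM2
  have hsm2 : smlink 3 (Lex, l.drop 3) = (strip (rsort M2), List.replicate K 1) := by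
    rw [smlink3_eq]
    have g0' : Lex.getD 0 0 = l.getD 0 0 - l.getD 1 0 := rfl
    have g1' : Lex.getD 1 0 = 1 := rfl
    have g2' : Lex.getD 2 0 = 1 := rfl
    have gd : Lex.drop 3 = List.replicate K 1 := rfl
    rw [g0', g1', g2', gd, strip_replicate_one, ← hp2, ← hM2]
  have hsmash : smlink 3 (smlink 3 (l, mu)) = (strip (rsort M2), List.replicate K 1) := by
    rw [hsm, hLL]; exact hsm2
  have hit2 : ∀ m : ℕ, (smlink 3)^[m + 2] (l, mu)
      = (smlink 3)^[m] (strip (rsort M2), List.replicate K 1) := by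
    intro m
    rw [← hsmash, Function.iterate_add_apply]
    congr 1
  -- apply the induction hypothesis to the double link
  have hv'' : ∀ m < n2, ValidLink 3 ((smlink 3)^[m] (strip (rsort M2), List.replicate K 1)) := by
    intro m hm
    have := hv (m + 2) (by omega)
    rwa [hit2 m] at this
  have he'' : (smlink 3)^[n2] (strip (rsort M2), List.replicate K 1)
      = (List.replicate 3 1, [1]) := by
    rw [← hit2 n2]
    exact he
  have hmu'' : (List.replicate K (1:ℤ)).getD 0 0 = 1 :=
    getD_replicate_one K (by omega) 0 (by omega)
  have hrepPart : IsPartition (List.replicate K (1:ℤ)) :=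
    ⟨List.pairwise_replicate.2 (Or.inr (le_refl 1)),
     fun x hx => by rw [List.eq_of_mem_replicate hx]; norm_num⟩
  have hp2val : p2 = mu.sum - 1 - l.getD 0 0 := by
    rw [hp2, hdropsum]
    linarith
  rcases ih n2 (by omega) (strip (rsort M2)) (List.replicate K 1)
      (strip_rsort_partition M2) hrepPart hv'' he'' hmu'' with h5 | h0
  · -- fifth part of the double link is positive
    have : 0 < (strip (rsort M2)).getD 4 0 := by
      apply pos_getD4
      · intro x hx
        rw [hM2] at hx
        simp only [List.mem_append, List.mem_cons, List.not_mem_nil, or_false] at hx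
        rcases hx with (rfl | rfl | rfl) | hx
        · linarith
        · linarith
        · linarith
        · exact hP'2.2 x hx
      · rw [hM2]
        simp only [List.length_append, List.length_cons, List.length_nil, List.length_drop]
        omega
    omega
  · -- head of the double link equals K = k - 2
    have hKsum : (List.replicate K (1:ℤ)).sum = (K : ℤ) := by simp
    rw [hKsum] at h0
    -- all entries of M2 are at most max(k-3, g1); if g1 ≤ k-3 contradiction
    have hg1k : mu.sum - 2 ≤ l.getD 1 0 := by
      by_contra hcon
      push_neg at hcon
      have hbound : (strip (rsort M2)).getD 0 0 ≤ mu.sum - 3 := by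
        apply getD_strip_rsort_le _ (by linarith) 0
        intro x hx
        rw [hM2] at hx
        simp only [List.mem_append, List.mem_cons, List.not_mem_nil, or_false] at hx
        rcases hx with (rfl | rfl | rfl) | hx
        · linarith
        · linarith
        · linarith
        · have := mem_drop_le h1.1 hx
          linarith
      rw [h0] at hbound
      have : (K : ℤ) = mu.sum - 2 := by rw [hsumK]; ring
      linarith
    have hg0eq : l.getD 0 0 = 3 := by linarith
    have hkeq : mu.sum = 4 := by linarith
    -- now l = (3,2,2,2,...) summing to 9, but λ₅ ≥ 1
    have hsum4 : (l.take 4).sum + (l.drop 4).sum = l.sum := List.sum_take_add_sum_drop l 4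
    rw [sum_take4] at hsum4
    have hd4 : (l.drop 4).getD 0 0 = l.getD 4 0 := getD_drop l 4 0
    have hle4 : l.getD 4 0 ≤ (l.drop 4).sum :=
      hd4 ▸ getD0_le_sum (fun x hx => le_of_lt (h1.2 x (List.mem_of_mem_drop hx)))
    linarith

end Dec

/-- A codimension-3 decoration `(λ, μ)` with `μ₁ = 1` (so `μ = (1^k)`) must
have either `λ₅ = 0` (at most four nonzero parts: the almost complete
intersection case) or `λ₁ = k` (the hyperplane section case). -/
theorem stmt15 (P : List ℤ × List ℤ) (k : ℤ) (hk : P.2.sum = k)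
    (h : IsDecoration 3 P) (hmu : P.2.getD 0 0 = 1) :
    P.1.getD 4 0 = 0 ∨ P.1.getD 0 0 = k := by
  obtain ⟨h1, h2, n, hv, he⟩ := h
  subst hk
  obtain ⟨l, mu⟩ := P
  exact Dec.aux n l mu h1 h2 hv he hmu
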